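/- Let F : S → Δ¹ be a map of simplicial sets. Let Δ_{/S} be the category of simplices of S, and let Δ⁰_{/S}, Δ¹_{/S}, Δ⁰¹_{/S} be its full subcategories of simplices whose image under F is {0}, {1}, Δ¹ respectively. Then the inclusion Δ⁰_{/S} ↪ Δ⁰_{/S} ∪ Δ⁰¹_{/S} admits a right adjoint, sending a simplex σ : Δⁿ → S to its restriction along {0} ×_{Δ¹} Δⁿ ↪ Δⁿ. -/

import Mathlib

/-!
STATEMENT 8.  Let `F : S → Δ¹` be a map of simplicial sets.  Let `Δ_{/S}` be
the category of simplices of `S` (realized as the opposite of the category of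
elements of `S`), and let `Δ⁰_{/S}`, `Δ⁰¹_{/S}` be its full subcategories of
simplices whose image under `F` is `{0}`, resp. contains `0` (the union
`Δ⁰_{/S} ∪ Δ⁰¹_{/S}` consists of simplices whose `0`-th vertex maps to `0`).
Then the inclusion `Δ⁰_{/S} ↪ Δ⁰_{/S} ∪ Δ⁰¹_{/S}` admits a right adjoint
(sending a simplex `σ : Δⁿ → S` to its restriction along the initial segment
`{0} ×_{Δ¹} Δⁿ ↪ Δⁿ`).
-/

open CategoryTheory Simplicial

noncomputable section

variable (S : SSet.{0}) (F : S ⟶ Δ[1])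

/-- The category of simplices of `S`, as the opposite of its category of
elements. -/
abbrev SimplexCat : Type _ := (Functor.Elements S)ᵒᵖ

/-- The predicate that all vertices of a simplex map to `0` under `F`
(the simplex lies in `Δ⁰_{/S}`). -/
def allZero (x : SimplexCat S) : Prop :=
  ∀ k, SSet.stdSimplex.asOrderHom (F.app x.unop.1 x.unop.2) k = 0

/-- The predicate that the `0`-th vertex of a simplex maps to `0` under `F`
(the simplex lies in `Δ⁰_{/S} ∪ Δ⁰¹_{/S}`). -/
def zeroAtZero (x : SimplexCat S) : Prop :=
  SSet.stdSimplex.asOrderHom (F.app x.unop.1 x.unop.2) 0 = 0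

namespace Aux
variable {S F}

def toHom (x : SimplexCat S) : Fin (x.unop.1.unop.len + 1) →o Fin 2 :=
  SSet.stdSimplex.asOrderHom (F.app x.unop.1 x.unop.2)

lemma toHom_map {c d : SimplexCategoryᵒᵖ} (g : c ⟶ d) (σ : S.obj c) (k) :
    SSet.stdSimplex.asOrderHom (F.app d (S.map g σ)) k
      = SSet.stdSimplex.asOrderHom (F.app c σ) (g.unop.toOrderHom k) := by
  rw [FunctorToTypes.naturality]; rfl

lemma toHom_comp {a b : SimplexCat S} (g : a ⟶ b) (k) :
    toHom (F := F) a k = toHom (F := F) b (g.unop.1.unop.toOrderHom k) := by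
  have h := g.unop.2
  dsimp [toHom]
  conv_lhs => rw [← h]
  exact toHom_map _ _ _

def lastZero (x : SimplexCat S) (hx : zeroAtZero S F x) :
    Fin (x.unop.1.unop.len + 1) :=
  (Finset.univ.filter (fun k => toHom (F := F) x k = 0)).max'
    ⟨0, by simp only [Finset.mem_filter, Finset.mem_univ, true_and]; exact hx⟩

lemma toHom_eq_zero_iff (x : SimplexCat S) (hx : zeroAtZero S F x)
    (k : Fin (x.unop.1.unop.len + 1)) :
    toHom (F := F) x k = 0 ↔ k ≤ lastZero (F := F) x hx := by
  constructor
  · intro h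
    exact Finset.le_max' _ _
      (by simp only [Finset.mem_filter, Finset.mem_univ, true_and]; exact h)
  · intro h
    have hm : toHom (F := F) x (lastZero (F := F) x hx) = 0 := by
      have hmem := (Finset.univ.filter (fun k => toHom (F := F) x k = 0)).max'_mem
        ⟨0, by simp only [Finset.mem_filter, Finset.mem_univ, true_and]; exact hx⟩
      simp only [Finset.mem_filter] at hmem
      exact hmem.2
    have hle := (toHom (F := F) x).monotone h
    rw [hm] at hle
    exact le_antisymm hle (Fin.zero_le _)

variable (S F)

/-- extensionality for morphisms of `SimplexCat S` -/
lemma hom_ext {a b : SimplexCat S} (f g : a ⟶ b)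
    (h : ∀ k, f.unop.1.unop.toOrderHom k = g.unop.1.unop.toOrderHom k) : f = g := by
  apply Quiver.Hom.unop_inj
  apply Subtype.ext
  apply Quiver.Hom.unop_inj
  exact SimplexCategory.Hom.ext _ _ (OrderHom.ext _ _ (funext h))

variable {S F}

/-- the initial-segment inclusion -/
def iota (x : SimplexCat S) (hx : zeroAtZero S F x) :
    SimplexCategory.mk (lastZero (F := F) x hx).1 ⟶ x.unop.1.unop :=
  SimplexCategory.Hom.mk
    ⟨fun i => ⟨i.1, lt_of_le_of_lt (Nat.lt_succ_iff.mp i.isLt) (lastZero (F := F) x hx).isLt⟩,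
     fun i j hij => hij⟩

variable (S F)

/-- the right adjoint on objects -/
def Gobj (x : ObjectProperty.FullSubcategory (zeroAtZero S F)) : ObjectProperty.FullSubcategory (allZero S F) := by
  refine ⟨Opposite.op ⟨Opposite.op (SimplexCategory.mk (lastZero (F := F) x.obj x.property).1),
    S.map (iota x.obj x.property).op x.obj.unop.2⟩, ?_⟩
  intro k
  rw [toHom_map]
  exact (toHom_eq_zero_iff x.obj x.property _).mpr (Nat.lt_succ_iff.mp k.isLt)


variable {S F}

/-- restriction of the underlying map to initial segments -/
def restr {a b : SimplexCat S} (g : a ⟶ b) (ha : zeroAtZero S F a) (hb : zeroAtZero S F b) :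
    SimplexCategory.mk (lastZero (F := F) a ha).1 ⟶
      SimplexCategory.mk (lastZero (F := F) b hb).1 :=
  SimplexCategory.Hom.mk
    ⟨fun i => ⟨(g.unop.1.unop.toOrderHom
        ⟨i.1, lt_of_le_of_lt (Nat.lt_succ_iff.mp
          (i.isLt : i.1 < (lastZero (F := F) a ha).1 + 1)) (lastZero (F := F) a ha).isLt⟩).1,
      by
        refine Nat.lt_succ_iff.mpr ((toHom_eq_zero_iff b hb _).mp ?_)
        rw [← toHom_comp g]
        exact (toHom_eq_zero_iff a ha _).mpr (Nat.lt_succ_iff.mp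
          (i.isLt : i.1 < (lastZero (F := F) a ha).1 + 1))⟩,
     fun i j hij => g.unop.1.unop.toOrderHom.monotone hij⟩

lemma restr_comm {a b : SimplexCat S} (g : a ⟶ b) (ha : zeroAtZero S F a)
    (hb : zeroAtZero S F b) :
    restr g ha hb ≫ iota b hb = iota a ha ≫ g.unop.1.unop :=
  SimplexCategory.Hom.ext _ _ (OrderHom.ext _ _ (funext fun i => rfl))

variable (S F)

/-- the right adjoint -/
def G : ObjectProperty.FullSubcategory (zeroAtZero S F) ⥤ ObjectProperty.FullSubcategory (allZero S F) where
  obj := Gobj S F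
  map {x y} g := by
    refine ObjectProperty.homMk (Quiver.Hom.op (X := (Gobj S F y).obj.unop) (Y := (Gobj S F x).obj.unop)
      ⟨(restr g.hom x.property y.property).op, ?_⟩)
    show S.map _ (S.map _ _) = _
    erw [← FunctorToTypes.map_comp_apply, ← op_comp, restr_comm, op_comp,
      FunctorToTypes.map_comp_apply]
    have h2 : S.map (g.hom.unop.1.unop).op y.obj.unop.2 = x.obj.unop.2 := g.hom.unop.2
    rw [h2]
    rfl
  map_id x := by
    apply ObjectProperty.hom_ext
    apply hom_ext
    intro k
    rfl
  map_comp f g := by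
    apply ObjectProperty.hom_ext
    apply hom_ext
    intro k
    rfl


variable {S F}

/-- the unit map on underlying simplex categories -/
def eta (y : ObjectProperty.FullSubcategory (allZero S F)) :
    y.obj.unop.1.unop ⟶ SimplexCategory.mk (lastZero (F := F) y.obj (y.property 0)).1 :=
  SimplexCategory.Hom.mk
    ⟨fun i => ⟨i.1, Nat.lt_succ_iff.mpr
        ((toHom_eq_zero_iff y.obj (y.property 0) i).mp (y.property i))⟩,
     fun i j hij => hij⟩

variable (S F)

def L : ObjectProperty.FullSubcategory (allZero S F) ⥤ ObjectProperty.FullSubcategory (zeroAtZero S F) :=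
  ObjectProperty.ιOfLE (P := allZero S F) (P' := zeroAtZero S F)
    (fun x (hx : allZero S F x) => (hx 0 : zeroAtZero S F x))

def adj : L S F ⊣ G S F :=
  Adjunction.mkOfUnitCounit
    { unit :=
      { app := fun y => ObjectProperty.homMk <| Quiver.Hom.op (X := ((G S F).obj ((L S F).obj y)).obj.unop)
          (Y := y.obj.unop)
          ⟨(eta y).op, by
            show S.map _ (S.map _ _) = _
            erw [← FunctorToTypes.map_comp_apply, ← op_comp]
            have : eta y ≫ iota ((L S F).obj y).obj ((L S F).obj y).property = 𝟙 _ :=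
              SimplexCategory.Hom.ext _ _ (OrderHom.ext _ _ (funext fun i => rfl))
            erw [this]
            exact FunctorToTypes.map_id_apply S _⟩
        naturality := fun a b g => by
          apply ObjectProperty.hom_ext
          apply hom_ext
          intro k
          rfl }
      counit :=
      { app := fun x => ObjectProperty.homMk <| Quiver.Hom.op (X := x.obj.unop)
          (Y := ((L S F).obj ((G S F).obj x)).obj.unop)
          ⟨(iota x.obj x.property).op, rfl⟩
        naturality := fun a b g => by
          apply ObjectProperty.hom_ext
          apply hom_ext
          intro k
          rfl }
      left_triangle := by
        ext y
        apply hom_ext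
        intro k
        rfl
      right_triangle := by
        ext x
        apply hom_ext
        intro k
        rfl }

end Aux

theorem simplices_inclusion_has_right_adjoint :
    (ObjectProperty.ιOfLE (P := allZero S F) (P' := zeroAtZero S F)
        (fun x (hx : allZero S F x) => (hx 0 : zeroAtZero S F x))).IsLeftAdjoint :=
  ⟨Aux.G S F, ⟨Aux.adj S F⟩⟩

end
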